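/- Let n ≥ 1 and r ≥ 1 be integers. For each coordinate q = 1, …, n let x^{(q)}_k = a_q + k·h_q be uniform nodes with a_q ∈ ℝ and h_q > 0, let f : ℝⁿ → ℝ, fix indices i_1, …, i_n, and let m = (a_1 + (i_1 − 1/2)h_1, …, a_n + (i_n − 1/2)h_n) be the midpoint of the central cell. Let P_0^{2r-1} be the tensor-product Lagrange interpolant of f on Π_{q=1}^n {x^{(q)}_{i_q-r}, …, x^{(q)}_{i_q+r-1}}, and for each multi-index k ∈ {0, …, r−1}ⁿ let P_k^r be the tensor-product Lagrange interpolant of f on Π_{q=1}^n {x^{(q)}_{i_q-r+k_q}, …, x^{(q)}_{i_q+k_q}}. Then P_0^{2r-1}(m) = Σ_{k ∈ {0,…,r−1}ⁿ} (Π_{q=1}^n (1/2^{2r-1})·binom(2r, 2k_q+1)) · P_k^r(m); that is, the multivariate optimal weights are the products of the one-dimensional optimal weights. -/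

import Mathlib

section TensorLagAux
open Finset Nat

lemma oddProd (m : ℕ) : ∏ t ∈ range m, (2*(t:ℝ)+1) = ((2*m)! : ℝ) / (2^m * (m ! : ℝ)) := by
  induction m with
  | zero => simp
  | succ m ih =>
    rw [Finset.prod_range_succ, ih]
    have h1 : (0:ℝ) < 2^m * (m ! : ℝ) := by positivity
    have h2 : (0:ℝ) < 2^(m+1) * ((m+1)! : ℝ) := by positivity
    rw [div_mul_eq_mul_div, div_eq_div_iff (ne_of_gt h1) (ne_of_gt h2)]
    have : 2*(m+1) = (2*m+1) + 1 := by ring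
    rw [this]
    push_cast [Nat.factorial_succ]
    ring

lemma natFact (m : ℕ) : ∏ t ∈ range m, ((t:ℝ)+1) = (m ! : ℝ) := by
  induction m with
  | zero => simp
  | succ m ih => rw [Finset.prod_range_succ, ih]; push_cast [Nat.factorial_succ]; ring

lemma IccImage' (A : ℤ) (m : ℕ) :
    Finset.Icc A (A + m - 1) = (Finset.range m).image (fun t : ℕ => A + (t:ℤ)) := by
  ext u
  simp only [Finset.mem_Icc, Finset.mem_image, Finset.mem_range]
  constructor
  · rintro ⟨h1, h2⟩
    exact ⟨(u - A).toNat, by omega, by omega⟩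
  · rintro ⟨t, ht, rfl⟩; omega

lemma prodIccRange (A : ℤ) (m : ℕ) (f : ℤ → ℝ) :
    ∏ u ∈ Finset.Icc A (A + m - 1), f u = ∏ t ∈ range m, f (A + t) := by
  rw [IccImage', Finset.prod_image (by intro x _ y _ h; have h' : A + (x:ℤ) = A + (y:ℤ) := h; omega)]

lemma Nlow (A : ℕ) : ∏ u ∈ Finset.Icc (-(A:ℤ)) (-1), (-(2*(u:ℝ)+1)) = ((2*A)! : ℝ) / (2^A * (A ! : ℝ)) := by
  have h : (-1 : ℤ) = -(A:ℤ) + A - 1 := by ring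
  rw [h, prodIccRange]
  rw [← oddProd]
  rw [← Finset.prod_range_reflect (fun t => 2*(t:ℝ)+1) A]
  apply Finset.prod_congr rfl
  intro t ht
  simp only [Finset.mem_range] at ht
  have : ((A - 1 - t : ℕ) : ℝ) = (A:ℝ) - 1 - t := by
    have : (A - 1 - t : ℕ) = A - (1 + t) := by omega
    rw [this, Nat.cast_sub (by omega)]
    push_cast; ring
  rw [this]
  push_cast
  ring

lemma Nhigh (B : ℕ) : ∏ u ∈ Finset.Icc (0:ℤ) (B:ℤ), (-(2*(u:ℝ)+1)) =
    (-1)^(B+1) * ((2*B+1)! : ℝ) / (2^B * (B ! : ℝ)) := by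
  have h : (B : ℤ) = 0 + (B+1 : ℕ) - 1 := by push_cast; ring
  rw [h, prodIccRange]
  have : ∀ t ∈ range (B+1), (-(2*((0 + (t:ℤ) : ℤ):ℝ)+1)) = (-1) * (2*(t:ℝ)+1) := by
    intro t _; push_cast; ring
  rw [Finset.prod_congr rfl this, Finset.prod_mul_distrib, Finset.prod_const, Finset.card_range, oddProd]
  have h1 : ((2*(B+1))! : ℝ) = (2*B+2) * ((2*B+1)! : ℝ) := by
    have : 2*(B+1) = (2*B+1)+1 := by ring
    rw [this, Nat.factorial_succ]; push_cast; ring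
  have h2 : (((B+1))! : ℝ) = (B+1) * (B ! : ℝ) := by rw [Nat.factorial_succ]; push_cast; ring
  rw [h1, h2]
  have hB : ((B:ℝ)+1) ≠ 0 := by positivity
  field_simp
  ring

lemma Dlow (j : ℤ) (m : ℕ) : ∏ u ∈ Finset.Icc (j - m) (j - 1), ((j:ℝ) - (u:ℝ)) = (m ! : ℝ) := by
  have h : (j - 1 : ℤ) = (j - m) + m - 1 := by ring
  rw [h, prodIccRange, ← natFact]
  rw [← Finset.prod_range_reflect (fun t => (t:ℝ)+1) m]
  apply Finset.prod_congr rfl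
  intro t ht
  simp only [Finset.mem_range] at ht
  have : ((m - 1 - t : ℕ) : ℝ) = (m:ℝ) - 1 - t := by
    have : (m - 1 - t : ℕ) = m - (1 + t) := by omega
    rw [this, Nat.cast_sub (by omega)]
    push_cast; ring
  rw [this]
  push_cast
  ring

lemma Dhigh (j : ℤ) (m : ℕ) : ∏ u ∈ Finset.Icc (j + 1) (j + m), ((j:ℝ) - (u:ℝ)) =
    (-1)^m * (m ! : ℝ) := by
  have h : (j + m : ℤ) = (j + 1) + m - 1 := by ring
  rw [h, prodIccRange]
  have : ∀ t ∈ range m, ((j:ℝ) - ((j + 1 + (t:ℤ) : ℤ):ℝ)) = (-1) * ((t:ℝ)+1) := by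
    intro t _; push_cast; ring
  rw [Finset.prod_congr rfl this, Finset.prod_mul_distrib, Finset.prod_const, natFact, Finset.card_range]

lemma eraseSplit (f : ℤ → ℝ) (a b j : ℤ) (ha : a ≤ j) (hb : j ≤ b) :
    ∏ u ∈ (Finset.Icc a b).erase j, f u =
      (∏ u ∈ Finset.Icc a (j-1), f u) * ∏ u ∈ Finset.Icc (j+1) b, f u := by
  rw [← Finset.prod_union (by simp only [Finset.disjoint_left, Finset.mem_Icc]; intro x h1 h2; omega)]
  apply Finset.prod_congr _ (fun _ _ => rfl)
  ext u
  simp only [Finset.mem_erase, Finset.mem_Icc, Finset.mem_union]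
  omega

lemma IccSplit0 (A B : ℕ) (f : ℤ → ℝ) :
    ∏ u ∈ Finset.Icc (-(A:ℤ)) (B:ℤ), f u =
      (∏ u ∈ Finset.Icc (-(A:ℤ)) (-1), f u) * ∏ u ∈ Finset.Icc (0:ℤ) (B:ℤ), f u := by
  rw [← Finset.prod_union (by simp only [Finset.disjoint_left, Finset.mem_Icc]; intro x h1 h2; omega)]
  apply Finset.prod_congr _ (fun _ _ => rfl)
  ext u
  simp only [Finset.mem_Icc, Finset.mem_union]
  omega

lemma Gval (A B P : ℕ) (j : ℤ) (hj : j = (P:ℤ) - A) (hP : P ≤ A + B) :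
    ∏ u ∈ (Finset.Icc (-(A:ℤ)) (B:ℤ)).erase j, ((-(1/2:ℝ) - (u:ℝ)) / ((j:ℝ) - (u:ℝ))) =
    ((-1)^(B+1) * (-1)^(A+B-P) * ((2*A)! : ℝ) * ((2*B+1)! : ℝ)) /
      ((2^(2*(A+B)) * (A ! : ℝ) * (B ! : ℝ)) *
        ((2*(A:ℝ) - 2*(P:ℝ) - 1) * (P ! : ℝ) * (((A+B-P))! : ℝ))) := by
  have hAj : -(A:ℤ) ≤ j := by omega
  have hjB : j ≤ (B:ℤ) := by omega
  have hc : (2*(A:ℝ) - 2*(P:ℝ) - 1) ≠ 0 := by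
    have h0 : ((2*(A:ℤ) - 2*(P:ℤ) - 1 : ℤ) : ℝ) ≠ 0 := Int.cast_ne_zero.mpr (by omega)
    push_cast at h0
    convert h0 using 2
  have hjcast : ((j:ℤ):ℝ) = (P:ℝ) - (A:ℝ) := by rw [hj]; push_cast; ring
  have hcj : -(2*((j:ℤ):ℝ)+1) = 2*(A:ℝ) - 2*(P:ℝ) - 1 := by rw [hjcast]; ring
  rw [Finset.prod_div_distrib]
  -- denominator
  have hden : ∏ u ∈ (Finset.Icc (-(A:ℤ)) (B:ℤ)).erase j, ((j:ℝ) - (u:ℝ))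
      = (P ! : ℝ) * ((-1)^(A+B-P) * ((A+B-P)! : ℝ)) := by
    rw [eraseSplit _ _ _ _ hAj hjB]
    have e1 : Finset.Icc (-(A:ℤ)) (j-1) = Finset.Icc (j - (P:ℕ)) (j-1) := by
      congr 1; omega
    have e2 : Finset.Icc (j+1) (B:ℤ) = Finset.Icc (j+1) (j + ((A+B-P : ℕ):ℤ)) := by
      congr 1; omega
    rw [e1, e2, Dlow, Dhigh]
  -- numerator
  have hmem : j ∈ Finset.Icc (-(A:ℤ)) (B:ℤ) := by simp only [Finset.mem_Icc]; omega
  have hnum : ∏ u ∈ (Finset.Icc (-(A:ℤ)) (B:ℤ)).erase j, (-(1/2:ℝ) - (u:ℝ))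
      = ((((2*A)! : ℝ) / (2^A * (A ! : ℝ))) * ((-1)^(B+1) * ((2*B+1)! : ℝ) / (2^B * (B ! : ℝ))))
        / (2*(A:ℝ) - 2*(P:ℝ) - 1) / 2^(A+B) := by
    have hcard : ((Finset.Icc (-(A:ℤ)) (B:ℤ)).erase j).card = A + B := by
      rw [Finset.card_erase_of_mem hmem, Int.card_Icc]
      omega
    have step1 : ∀ u ∈ (Finset.Icc (-(A:ℤ)) (B:ℤ)).erase j,
        (-(1/2:ℝ) - (u:ℝ)) = (-(2*(u:ℝ)+1)) / 2 := fun u _ => by ring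
    rw [Finset.prod_congr rfl step1, Finset.prod_div_distrib, Finset.prod_const, hcard]
    have key : ∏ u ∈ (Finset.Icc (-(A:ℤ)) (B:ℤ)).erase j, (-(2*(u:ℝ)+1))
        = (∏ u ∈ Finset.Icc (-(A:ℤ)) (B:ℤ), (-(2*(u:ℝ)+1))) / (2*(A:ℝ) - 2*(P:ℝ) - 1) := by
      rw [← Finset.mul_prod_erase _ _ hmem, hcj, mul_comm, mul_div_assoc, div_self hc, mul_one]
    rw [key, IccSplit0, Nlow, Nhigh]
  rw [hnum, hden]
  have h2AB : (2:ℝ)^(A+B) ≠ 0 := by positivity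
  have hfA : (A ! : ℝ) ≠ 0 := by positivity
  have hfB : (B ! : ℝ) ≠ 0 := by positivity
  have hfP : (P ! : ℝ) ≠ 0 := by positivity
  have hfm : (((A+B-P))! : ℝ) ≠ 0 := by positivity
  have hs : ((-1:ℝ))^(A+B-P) ≠ 0 := by
    apply pow_ne_zero; norm_num
  rcases Nat.even_or_odd (A+B-P) with he | ho
  · rw [he.neg_one_pow]; field_simp; ring
  · rw [ho.neg_one_pow]; field_simp; ring

lemma vandIf (r P : ℕ) (hr : 1 ≤ r) (hP : P ≤ 2*r - 1) :
    ((2*r-1).choose P : ℝ) =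
      ∑ k ∈ range r, (if k ≤ P ∧ P ≤ k + r
        then (((r-1).choose k : ℝ) * (r.choose (P-k) : ℝ)) else 0) := by
  have nat_eq : (2*r-1).choose P
      = ∑ k ∈ range r, (if k ≤ P ∧ P ≤ k + r
          then ((r-1).choose k) * (r.choose (P-k)) else 0) := by
    have h1 : 2*r-1 = (r-1) + r := by omega
    rw [h1, Nat.add_choose_eq, Finset.Nat.sum_antidiagonal_eq_sum_range_succ_mk]
    have step1 : ∑ k ∈ range (P+1), ((r-1).choose k) * (r.choose (P-k))
        = ∑ k ∈ range (P+1), (if k ≤ P ∧ P ≤ k + r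
            then ((r-1).choose k) * (r.choose (P-k)) else 0) := by
      apply Finset.sum_congr rfl
      intro k hk
      simp only [Finset.mem_range] at hk
      by_cases hc : k ≤ P ∧ P ≤ k + r
      · rw [if_pos hc]
      · rw [if_neg hc]
        have : r < P - k := by omega
        rw [Nat.choose_eq_zero_of_lt this, mul_zero]
    rw [step1]
    have step2 : ∑ k ∈ range (P+1), (if k ≤ P ∧ P ≤ k + r
            then ((r-1).choose k) * (r.choose (P-k)) else 0)
        = ∑ k ∈ range (2*r), (if k ≤ P ∧ P ≤ k + r
            then ((r-1).choose k) * (r.choose (P-k)) else 0) := by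
      apply Finset.sum_subset
      · intro k hk; simp only [Finset.mem_range] at *; omega
      · intro k _ hk
        simp only [Finset.mem_range, not_lt] at hk
        rw [if_neg (by omega)]
    rw [step2]
    symm
    apply Finset.sum_subset
    · intro k hk; simp only [Finset.mem_range] at *; omega
    · intro k _ hk2
      simp only [Finset.mem_range, not_lt] at hk2
      by_cases hc : k ≤ P ∧ P ≤ k + r
      · rw [if_pos hc, Nat.choose_eq_zero_of_lt (by omega), zero_mul]
      · rw [if_neg hc]
  calc ((2*r-1).choose P : ℝ)
      = ((∑ k ∈ range r, (if k ≤ P ∧ P ≤ k + r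
          then ((r-1).choose k) * (r.choose (P-k)) else 0) : ℕ) : ℝ) := by rw [← nat_eq]
    _ = _ := by
        push_cast
        apply Finset.sum_congr rfl
        intro k _
        split <;> simp

lemma oneD (r P : ℕ) (j : ℤ) (hr : 1 ≤ r) (hP : P ≤ 2*r-1) (hj : j = (P:ℤ) - r) :
    ∏ u ∈ (Finset.Icc (-(r:ℤ)) ((r:ℤ)-1)).erase j, ((-(1/2:ℝ) - (u:ℝ)) / ((j:ℝ) - (u:ℝ))) =
    ∑ k ∈ range r, ((2*r).choose (2*k+1) : ℝ)/2^(2*r-1) *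
      (if k ≤ P ∧ P ≤ k + r then
        ∏ u ∈ (Finset.Icc ((k:ℤ)-(r:ℤ)) (k:ℤ)).erase j, ((-(1/2:ℝ) - (u:ℝ)) / ((j:ℝ) - (u:ℝ)))
      else 0) := by
  have hc : (2*(r:ℝ) - 2*(P:ℝ) - 1) ≠ 0 := by
    have h0 : ((2*(r:ℤ) - 2*(P:ℤ) - 1 : ℤ) : ℝ) ≠ 0 := Int.cast_ne_zero.mpr (by omega)
    push_cast at h0
    convert h0 using 1
  set c : ℝ := 2*(r:ℝ) - 2*(P:ℝ) - 1 with hcdef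
  set X : ℝ := 2^(2*r) with hX
  have hX0 : X ≠ 0 := by rw [hX]; positivity
  set K : ℝ := ((-1:ℝ)^(r+P+1) * ((2*r)! : ℝ) * 4) / (X^2 * (r ! : ℝ) * (((r-1))! : ℝ) * c)
    with hK
  -- LHS closed form
  have hL : ∏ u ∈ (Finset.Icc (-(r:ℤ)) ((r:ℤ)-1)).erase j,
        ((-(1/2:ℝ) - (u:ℝ)) / ((j:ℝ) - (u:ℝ))) = K * ((2*r-1).choose P : ℝ) := by
    have hb : ((r:ℤ)-1) = (((r-1:ℕ)):ℤ) := by omega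
    rw [hb, Gval r (r-1) P j hj (by omega)]
    have s1 : ((-1:ℝ))^((r-1)+1) * ((-1:ℝ))^(r+(r-1)-P) = ((-1:ℝ))^(r+P+1) := by
      rw [← pow_add, neg_one_pow_eq_pow_mod_two,
        show (((r-1)+1) + (r+(r-1)-P)) % 2 = (r+P+1) % 2 by omega,
        ← neg_one_pow_eq_pow_mod_two]
    have s2 : ((2*(r-1)+1)! : ℝ) = ((2*r-1)! : ℝ) := by norm_cast; congr 1; omega
    have s3 : (((r+(r-1)-P))! : ℝ) = ((2*r-1-P)! : ℝ) := by norm_cast; congr 1; omega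
    have s4 : ((2:ℝ))^(2*(r+(r-1))) = X^2/4 := by
      rw [hX, ← pow_mul, eq_div_iff (by norm_num : (4:ℝ) ≠ 0),
        show (4:ℝ) = 2^2 by norm_num, ← pow_add]
      congr 1; omega
    have hfact : ((2*r-1).choose P : ℝ) = ((2*r-1)! : ℝ)/((P ! : ℝ) * ((2*r-1-P)! : ℝ)) :=
      Nat.cast_choose ℝ (by omega)
    rw [s1, s2, s3, s4, hK, hfact]
    rw [← hcdef]
    have hP0 : (P ! : ℝ) ≠ 0 := by positivity
    have hm0 : ((2*r-1-P)! : ℝ) ≠ 0 := by positivity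
    have hr0 : (r ! : ℝ) ≠ 0 := by positivity
    have hr1 : (((r-1))! : ℝ) ≠ 0 := by positivity
    field_simp
  rw [hL, vandIf r P hr hP, Finset.mul_sum]
  apply Finset.sum_congr rfl
  intro k hk
  simp only [Finset.mem_range] at hk
  by_cases hcnd : k ≤ P ∧ P ≤ k + r
  · rw [if_pos hcnd, if_pos hcnd]
    -- small window closed form
    have hlow : ((k:ℤ)-(r:ℤ)) = -(((r-k:ℕ)):ℤ) := by omega
    have hj2 : j = (((P-k:ℕ)):ℤ) - ((r-k:ℕ)) := by omega
    rw [hlow, Gval (r-k) k (P-k) j hj2 (by omega)]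
    have hcc : (2*(((r-k:ℕ)):ℝ) - 2*(((P-k:ℕ)):ℝ) - 1) = c := by
      rw [hcdef, Nat.cast_sub (by omega), Nat.cast_sub (by omega)]; ring
    rw [hcc]
    have s1 : ((-1:ℝ))^(k+1) * ((-1:ℝ))^((r-k)+k-(P-k)) = ((-1:ℝ))^(r+P+1) := by
      rw [← pow_add, neg_one_pow_eq_pow_mod_two,
        show ((k+1) + ((r-k)+k-(P-k))) % 2 = (r+P+1) % 2 by omega,
        ← neg_one_pow_eq_pow_mod_two]
    have s3 : ((((r-k)+k-(P-k)))! : ℝ) = ((r-(P-k))! : ℝ) := by norm_cast; congr 1; omega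
    have s4 : ((2:ℝ))^(2*((r-k)+k)) = X := by rw [hX]; congr 1; omega
    have s5 : ((2:ℝ))^(2*r-1) = X/2 := by
      rw [hX, eq_div_iff (by norm_num : (2:ℝ) ≠ 0), ← pow_succ]
      congr 1; omega
    have eC1 : (((2*r).choose (2*k+1)) : ℝ)
        = ((2*r)! : ℝ)/(((2*k+1)! : ℝ) * (((2*r-(2*k+1)))! : ℝ)) := Nat.cast_choose ℝ (by omega)
    have eCb : (((r-1).choose k) : ℝ) = (((r-1))! : ℝ)/((k ! : ℝ) * (((r-1-k))! : ℝ)) :=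
      Nat.cast_choose ℝ (by omega)
    have eCc : ((r.choose (P-k)) : ℝ) = ((r)! : ℝ)/(((P-k)! : ℝ) * (((r-(P-k)))! : ℝ)) :=
      Nat.cast_choose ℝ (by omega)
    have f1 : ((2*(r-k))! : ℝ) = (2*(r:ℝ)-2*(k:ℝ)) * (((2*r-(2*k+1)))! : ℝ) := by
      have e : 2*(r-k) = (2*r-(2*k+1)) + 1 := by omega
      rw [e, Nat.factorial_succ]
      have : (((2*r-(2*k+1)) : ℕ) : ℝ) = 2*(r:ℝ)-2*(k:ℝ)-1 := by
        rw [Nat.cast_sub (by omega)]; push_cast; ring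
      push_cast [this]
      ring
    have f2 : ((r-k)! : ℝ) = ((r:ℝ)-(k:ℝ)) * (((r-1-k))! : ℝ) := by
      have e : r-k = (r-1-k) + 1 := by omega
      rw [e, Nat.factorial_succ]
      have : (((r-1-k) : ℕ) : ℝ) = (r:ℝ)-(k:ℝ)-1 := by
        rw [Nat.cast_sub (by omega), Nat.cast_sub (by omega)]; push_cast; ring
      push_cast [this]
      ring
    have hrk : ((r:ℝ)-(k:ℝ)) ≠ 0 := by
      have : (k:ℝ) < (r:ℝ) := by exact_mod_cast hk
      linarith
    rw [s1, s3, s4, s5, eC1, eCb, eCc, f1, f2, hK]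
    have n1 : ((2*k+1)! : ℝ) ≠ 0 := by positivity
    have n2 : (((2*r-(2*k+1)))! : ℝ) ≠ 0 := by positivity
    have n3 : (k ! : ℝ) ≠ 0 := by positivity
    have n4 : (((r-1-k))! : ℝ) ≠ 0 := by positivity
    have n5 : (((P-k))! : ℝ) ≠ 0 := by positivity
    have n6 : (((r-(P-k)))! : ℝ) ≠ 0 := by positivity
    have n7 : (r ! : ℝ) ≠ 0 := by positivity
    have n8 : (((r-1))! : ℝ) ≠ 0 := by positivity
    field_simp
    ring
  · rw [if_neg hcnd, if_neg hcnd, mul_zero, mul_zero]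

lemma IccImage (i A B : ℤ) (l : ℤ) :
    (Finset.Icc (i + A) (i + B)).erase (i + l) = ((Finset.Icc A B).erase l).image (i + ·) := by
  ext u
  simp only [Finset.mem_erase, Finset.mem_Icc, Finset.mem_image]
  constructor
  · rintro ⟨h1, h2⟩
    exact ⟨u - i, ⟨by omega, by omega, by omega⟩, by omega⟩
  · rintro ⟨v, ⟨h1, h2, h3⟩, rfl⟩
    exact ⟨by omega, by omega, by omega⟩

lemma prodShiftErase (i A B j l : ℤ) (hrel : l = i + j) (F : ℤ → ℝ) :
    ∏ m ∈ (Finset.Icc (i + A) (i + B)).erase l, F m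
      = ∏ u ∈ (Finset.Icc A B).erase j, F (i + u) := by
  subst hrel
  rw [IccImage, Finset.prod_image (by intro x _ y _ h2; have h' : i + x = i + y := h2; omega)]

lemma oneDApplied (r : ℕ) (hr : 1 ≤ r) (a h : ℝ) (hh : 0 < h) (i l : ℤ) (x : ℤ → ℝ)
    (hx : ∀ m : ℤ, x m = a + (m:ℝ) * h) (hl : l ∈ Finset.Icc (i - r) (i + r - 1)) :
    ∏ m ∈ (Finset.Icc (i - r) (i + r - 1)).erase l,
        ((a + ((i:ℝ) - 1/2)*h - x m) / (x l - x m)) =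
    ∑ k ∈ range r, ((2*r).choose (2*k+1) : ℝ)/2^(2*r-1) *
      (if l ∈ Finset.Icc (i - r + k) (i + k) then
        ∏ m ∈ (Finset.Icc (i - r + k) (i + k)).erase l,
          ((a + ((i:ℝ) - 1/2)*h - x m) / (x l - x m))
      else 0) := by
  simp only [Finset.mem_Icc] at hl
  set P : ℕ := (l - i + r).toNat with hPdef
  have hPz : (P:ℤ) = l - i + r := by omega
  have hP : P ≤ 2*r - 1 := by omega
  have hj : l - i = (P:ℤ) - r := by omega
  -- pointwise form of factors
  have hfac : ∀ u : ℤ, (a + ((i:ℝ) - 1/2)*h - x (i + u)) / (x l - x (i + u))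
      = (-(1/2:ℝ) - (u:ℝ)) / (((l - i : ℤ):ℝ) - (u:ℝ)) := by
    intro u
    rw [hx (i+u), hx l]
    have e1 : a + ((i:ℝ) - 1/2)*h - (a + ((i+u : ℤ):ℝ) * h) = (-(1/2:ℝ) - (u:ℝ)) * h := by
      push_cast; ring
    have e2 : (a + (l:ℝ) * h) - (a + ((i+u : ℤ):ℝ) * h) = (((l - i : ℤ):ℝ) - (u:ℝ)) * h := by
      push_cast; ring
    rw [e1, e2, mul_div_mul_right _ _ (ne_of_gt hh)]
  -- big product
  have big : ∏ m ∈ (Finset.Icc (i - r) (i + r - 1)).erase l,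
        ((a + ((i:ℝ) - 1/2)*h - x m) / (x l - x m))
      = ∏ u ∈ (Finset.Icc (-(r:ℤ)) ((r:ℤ)-1)).erase (l - i),
          ((-(1/2:ℝ) - (u:ℝ)) / (((l-i:ℤ):ℝ) - (u:ℝ))) := by
    have e1 : i - (r:ℤ) = i + (-(r:ℤ)) := by ring
    have e2 : i + (r:ℤ) - 1 = i + ((r:ℤ)-1) := by ring
    rw [e1, e2, prodShiftErase i _ _ (l-i) l (by omega)]
    exact Finset.prod_congr rfl (fun u _ => hfac u)
  rw [big, hj, oneD r P ((P:ℤ) - r) hr hP rfl]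
  apply Finset.sum_congr rfl
  intro k hk
  simp only [Finset.mem_range] at hk
  congr 1
  have hcond : (k ≤ P ∧ P ≤ k + r) ↔ (l ∈ Finset.Icc (i - r + k) (i + k)) := by
    simp only [Finset.mem_Icc]; omega
  by_cases hcnd : k ≤ P ∧ P ≤ k + r
  · rw [if_pos hcnd, if_pos (hcond.mp hcnd)]
    have small : ∏ m ∈ (Finset.Icc (i - r + k) (i + k)).erase l,
          ((a + ((i:ℝ) - 1/2)*h - x m) / (x l - x m))
        = ∏ u ∈ (Finset.Icc ((k:ℤ)-(r:ℤ)) (k:ℤ)).erase (l - i),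
            ((-(1/2:ℝ) - (u:ℝ)) / (((l-i:ℤ):ℝ) - (u:ℝ))) := by
      have e1 : i - (r:ℤ) + k = i + ((k:ℤ) - r) := by ring
      have e2 : i + (k:ℤ) = i + (k:ℤ) := rfl
      rw [e1, prodShiftErase i _ _ (l-i) l (by omega)]
      exact Finset.prod_congr rfl (fun u _ => hfac u)
    rw [small, hj]
  · rw [if_neg hcnd, if_neg (fun hmem => hcnd (hcond.mpr hmem))]

end TensorLagAux

/-- Value at `y` of the tensor-product Lagrange interpolant of `f` on the Cartesian
product of the node sets `{x q k : k ∈ s q}`, `q = 1, …, n`. -/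
noncomputable def tensorLagEval (n : ℕ) (s : Fin n → Finset ℤ) (x : Fin n → ℤ → ℝ)
    (f : (Fin n → ℝ) → ℝ) (y : Fin n → ℝ) : ℝ :=
  ∑ l ∈ Fintype.piFinset s, f (fun q => x q (l q)) *
    ∏ q, ∏ k ∈ (s q).erase (l q), (y q - x q k) / (x q (l q) - x q k)

open Finset Nat in
theorem stmt13 (n r : ℕ) (hn : 1 ≤ n) (hr : 1 ≤ r)
    (a h : Fin n → ℝ) (hh : ∀ q, 0 < h q) (i : Fin n → ℤ)
    (x : Fin n → ℤ → ℝ) (hx : ∀ (q : Fin n) (m : ℤ), x q m = a q + (m : ℝ) * h q)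
    (f : (Fin n → ℝ) → ℝ) (mid : Fin n → ℝ)
    (hmid : ∀ q : Fin n, mid q = a q + ((i q : ℝ) - 1 / 2) * h q) :
    tensorLagEval n (fun q => Finset.Icc (i q - r) (i q + r - 1)) x f mid =
      ∑ k ∈ Fintype.piFinset (fun _ : Fin n => Finset.range r),
        (∏ q : Fin n, ((Nat.choose (2 * r) (2 * k q + 1) : ℝ) / 2 ^ (2 * r - 1))) *
          tensorLagEval n (fun q => Finset.Icc (i q - r + k q) (i q + k q)) x f mid := by
  classical
  unfold tensorLagEval
  have main : (∑ k ∈ Fintype.piFinset (fun _ : Fin n => Finset.range r),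
        (∏ q : Fin n, ((Nat.choose (2 * r) (2 * k q + 1) : ℝ) / 2 ^ (2 * r - 1))) *
          ∑ l ∈ Fintype.piFinset (fun q => Finset.Icc (i q - r + k q) (i q + k q)),
            f (fun q => x q (l q)) *
              ∏ q, ∏ m ∈ (Finset.Icc (i q - r + k q) (i q + k q)).erase (l q),
                (mid q - x q m) / (x q (l q) - x q m))
      = ∑ k ∈ Fintype.piFinset (fun _ : Fin n => Finset.range r),
          ∑ l ∈ Fintype.piFinset (fun q => Finset.Icc (i q - r) (i q + r - 1)),
            f (fun q => x q (l q)) *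
              ∏ q : Fin n, (((Nat.choose (2 * r) (2 * k q + 1) : ℝ) / 2 ^ (2 * r - 1)) *
                (if l q ∈ Finset.Icc (i q - r + k q) (i q + k q) then
                  ∏ m ∈ (Finset.Icc (i q - r + k q) (i q + k q)).erase (l q),
                    (mid q - x q m) / (x q (l q) - x q m)
                else 0)) := by
    apply Finset.sum_congr rfl
    intro k hk
    have hsub : Fintype.piFinset (fun q => Finset.Icc (i q - r + k q) (i q + k q))
        ⊆ Fintype.piFinset (fun q => Finset.Icc (i q - r) (i q + r - 1)) := by
      apply Fintype.piFinset_subset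
      intro q
      rw [Fintype.mem_piFinset] at hk
      have hkq := hk q
      rw [Finset.mem_range] at hkq
      intro u hu
      simp only [Finset.mem_Icc] at *
      omega
    rw [Finset.mul_sum, ← Finset.inter_eq_right.mpr hsub, ← Finset.sum_ite_mem]
    apply Finset.sum_congr rfl
    intro l _
    by_cases hall : l ∈ Fintype.piFinset (fun q => Finset.Icc (i q - r + k q) (i q + k q))
    · rw [if_pos hall]
      rw [Fintype.mem_piFinset] at hall
      rw [mul_left_comm, ← Finset.prod_mul_distrib]
      congr 1
      apply Finset.prod_congr rfl
      intro q _
      rw [if_pos (hall q)]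
    · rw [if_neg hall]
      rw [Fintype.mem_piFinset] at hall
      push_neg at hall
      obtain ⟨q0, hq0⟩ := hall
      symm
      rw [Finset.prod_eq_zero (Finset.mem_univ q0) (by rw [if_neg hq0, mul_zero]), mul_zero]
  rw [main, Finset.sum_comm]
  apply Finset.sum_congr rfl
  intro l hl
  rw [← Finset.mul_sum]
  congr 1
  have huniv := Finset.prod_univ_sum (fun _ : Fin n => Finset.range r)
    (fun q t => ((Nat.choose (2*r) (2*t+1) : ℝ))/2^(2*r-1) *
      (if l q ∈ Finset.Icc (i q - r + t) (i q + t) then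
        ∏ m ∈ (Finset.Icc (i q - r + t) (i q + t)).erase (l q),
          (mid q - x q m) / (x q (l q) - x q m)
      else 0))
  rw [← huniv]
  apply Finset.prod_congr rfl
  intro q _
  rw [Fintype.mem_piFinset] at hl
  have hlq := hl q
  have happ := oneDApplied r hr (a q) (h q) (hh q) (i q) (l q) (x q) (hx q) hlq
  rw [hmid q]
  exact happ
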